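/- arXiv:1009.4430 — 5 statements merged into one kernel-verified Lean document; each statement's English description precedes it below -/
import Mathlib

section
/- Let n be a positive integer and let f be a continuous strictly increasing function on [0,1] with f(0) = 0, f(1) = 1, such that f is differentiable at 0 with f'(0) > (1/2)·9^n. Then there exist numbers 0 < u_n < v_n < u_{n−1} < v_{n−1} < … < u_1 < v_1 ≤ 1 such that f(u_i) = 3·9^{i−1} u_i and f(v_i) = 9^{i−1} v_i for every i = 1,…,n. -/
/-- Targets for the chain: `tgt (2i) = 9^i`, `tgt (2i+1) = 3·9^i`. -/
noncomputable def tgt (k : ℕ) : ℝ :=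
  if k % 2 = 0 then (9:ℝ) ^ (k / 2) else 3 * (9:ℝ) ^ (k / 2)

lemma tgt_even (i : ℕ) : tgt (2 * i) = (9:ℝ) ^ i := by
  simp [tgt, Nat.mul_mod_right, Nat.mul_div_cancel_left _ (by norm_num : 0 < 2)]

lemma tgt_odd (i : ℕ) : tgt (2 * i + 1) = 3 * (9:ℝ) ^ i := by
  have h1 : (2 * i + 1) % 2 = 1 := by omega
  have h2 : (2 * i + 1) / 2 = i := by omega
  simp [tgt, h1, h2]

lemma tgt_lt_succ (k : ℕ) : tgt k < tgt (k + 1) := by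
  have h9 : (0:ℝ) < (9:ℝ) ^ (k / 2) := by positivity
  rcases Nat.even_or_odd k with ⟨i, hi⟩ | ⟨i, hi⟩
  · subst hi
    have hk : i + i = 2 * i := by ring
    rw [hk, tgt_even, tgt_odd]
    nlinarith [pow_pos (by norm_num : (0:ℝ) < 9) i]
  · subst hi
    rw [tgt_odd]
    have hk : 2 * i + 1 + 1 = 2 * (i + 1) := by ring
    rw [hk, tgt_even, pow_succ]
    nlinarith [pow_pos (by norm_num : (0:ℝ) < 9) i]

lemma tgt_lt (k n : ℕ) (hn : 0 < n) (hk : k < 2 * n) : tgt k < (1/2 : ℝ) * 9 ^ n := by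
  have h1 : tgt k ≤ 3 * (9:ℝ) ^ (k / 2) := by
    unfold tgt
    split
    · nlinarith [pow_pos (by norm_num : (0:ℝ) < 9) (k / 2)]
    · exact le_refl _
  have h2 : (9:ℝ) ^ (k / 2) ≤ 9 ^ (n - 1) := by
    apply pow_le_pow_right₀ (by norm_num : (1:ℝ) ≤ 9)
    omega
  have h3 : (9:ℝ) ^ n = 9 ^ (n - 1) * 9 := by
    rw [← pow_succ]
    congr 1
    omega
  have h4 : (0:ℝ) < 9 ^ (n - 1) := by positivity
  nlinarith

/-- First step in the proof of Lemma 2: if `f` is continuous and strictly increasing on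
`[0,1]`, `f 0 = 0`, `f 1 = 1`, and `f` is differentiable at `0` (from within `[0,1]`)
with derivative `d > (1/2)·9^n`, then there exist
`0 < u_n < v_n < u_{n-1} < v_{n-1} < … < u_1 < v_1 ≤ 1` with `f(u_i) = 3·9^(i-1) u_i`
and `f(v_i) = 9^(i-1) v_i` for every `i`.
(Here index `i : Fin n` corresponds to the paper's index `i + 1`.) -/
theorem exists_uv_chain (n : ℕ) (hn : 0 < n) (f : ℝ → ℝ)
    (hcont : ContinuousOn f (Set.Icc (0:ℝ) 1))
    (hmono : StrictMonoOn f (Set.Icc (0:ℝ) 1))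
    (hf0 : f 0 = 0) (hf1 : f 1 = 1)
    (d : ℝ) (hd : HasDerivWithinAt f d (Set.Icc (0:ℝ) 1) 0)
    (hd' : (1/2 : ℝ) * 9 ^ n < d) :
    ∃ u v : Fin n → ℝ,
      (∀ i, 0 < u i) ∧ (∀ i, u i < v i) ∧ (∀ i j : Fin n, i < j → v j < u i) ∧
      v ⟨0, hn⟩ ≤ 1 ∧
      (∀ i, f (u i) = 3 * 9 ^ (i : ℕ) * u i) ∧
      (∀ i, f (v i) = 9 ^ (i : ℕ) * v i) := by
  -- the slope tends to d within (0,1]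
  have hslope : Filter.Tendsto (fun z => f z / z) (nhdsWithin 0 (Set.Ioc (0:ℝ) 1)) (nhds d) := by
    have h := hasDerivWithinAt_iff_tendsto_slope.mp hd
    have hset : Set.Icc (0:ℝ) 1 \ {0} = Set.Ioc (0:ℝ) 1 := Set.Icc_diff_left
    rw [hset] at h
    refine h.congr' ?_
    filter_upwards [self_mem_nhdsWithin] with z hz
    simp [slope, hf0, div_eq_inv_mul]
  have hne : (nhdsWithin (0:ℝ) (Set.Ioc (0:ℝ) 1)).NeBot := by
    apply mem_closure_iff_nhdsWithin_neBot.mp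
    rw [closure_Ioc (by norm_num : (0:ℝ) ≠ 1)]
    exact Set.left_mem_Icc.mpr (by norm_num)
  -- key step: IVT for f x / x
  have key : ∀ a, 0 < a → a ≤ 1 → ∀ c, f a < c * a → c < d →
      ∃ b, 0 < b ∧ b < a ∧ f b = c * b := by
    intro a ha ha1 c hac hcd
    have h1 : ∀ᶠ z in nhdsWithin (0:ℝ) (Set.Ioc (0:ℝ) 1), c < f z / z :=
      hslope.eventually (eventually_gt_nhds hcd)
    have h2 : ∀ᶠ z in nhdsWithin (0:ℝ) (Set.Ioc (0:ℝ) 1), z < a :=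
      Filter.Eventually.filter_mono nhdsWithin_le_nhds (eventually_lt_nhds ha)
    have h3 : ∀ᶠ z in nhdsWithin (0:ℝ) (Set.Ioc (0:ℝ) 1), z ∈ Set.Ioc (0:ℝ) 1 :=
      eventually_mem_nhdsWithin
    obtain ⟨x, hx1, hx2, hx3⟩ := (h1.and (h2.and h3)).exists
    have hx0 : 0 < x := hx3.1
    have hsub : Set.Icc x a ⊆ Set.Icc (0:ℝ) 1 := fun z hz =>
      ⟨le_of_lt (lt_of_lt_of_le hx0 hz.1), le_trans hz.2 ha1⟩
    have hg : ContinuousOn (fun z => f z / z) (Set.Icc x a) := by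
      apply ContinuousOn.div (hcont.mono hsub) continuousOn_id
      intro z hz
      exact ne_of_gt (lt_of_lt_of_le hx0 hz.1)
    have hca : f a / a < c := (div_lt_iff₀ ha).mpr hac
    have hmem : c ∈ Set.Icc (f a / a) (f x / x) := ⟨le_of_lt hca, le_of_lt hx1⟩
    obtain ⟨b, hb, hgb⟩ := intermediate_value_Icc' (le_of_lt hx2) hg hmem
    have hb0 : 0 < b := lt_of_lt_of_le hx0 hb.1
    have hgb' : f b / b = c := hgb
    have hba : b ≠ a := by
      intro h
      rw [h] at hgb'
      exact absurd hgb' (ne_of_lt hca)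
    refine ⟨b, hb0, lt_of_le_of_ne hb.2 hba, ?_⟩
    field_simp at hgb'
    linarith [hgb']
  -- build the chain
  have chain : ∀ m : ℕ, m ≤ 2 * n → ∃ w : ℕ → ℝ, w 0 = 1 ∧
      (∀ k, k < m → 0 < w k ∧ w k ≤ 1 ∧ f (w k) = tgt k * w k) ∧
      (∀ k, k + 1 < m → w (k + 1) < w k) := by
    intro m
    induction m with
    | zero =>
      exact fun _ => ⟨fun _ => 1, rfl, fun k hk => absurd hk (Nat.not_lt_zero k),
        fun k hk => absurd hk (Nat.not_lt_zero _)⟩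
    | succ m ih =>
      intro hm
      obtain ⟨w, hw0, hwk, hwd⟩ := ih (by omega)
      rcases Nat.eq_zero_or_pos m with hm0 | hmpos
      · subst hm0
        refine ⟨w, hw0, ?_, fun k hk => by omega⟩
        intro k hk
        interval_cases k
        refine ⟨by rw [hw0]; norm_num, by rw [hw0], ?_⟩
        rw [hw0]
        simp [tgt, hf1]
      · obtain ⟨hp, hp1, hfp⟩ := hwk (m - 1) (by omega)
        have hmm : m - 1 + 1 = m := by omega
        have htlt : tgt (m - 1) < tgt m := by
          conv_rhs => rw [← hmm]
          exact tgt_lt_succ (m - 1)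
        have hfd : f (w (m - 1)) < tgt m * w (m - 1) := by
          rw [hfp]
          exact mul_lt_mul_of_pos_right htlt hp
        have htd : tgt m < d := lt_trans (tgt_lt m n hn (by omega)) hd'
        obtain ⟨b, hb0, hba, hfb⟩ := key (w (m - 1)) hp hp1 (tgt m) hfd htd
        refine ⟨fun k => if k = m then b else w k, ?_, ?_, ?_⟩
        · simp only [if_neg (by omega : (0:ℕ) ≠ m)]
          exact hw0
        · intro k hk
          by_cases hkm : k = m
          · subst hkm
            simp only [if_pos rfl]
            exact ⟨hb0, le_trans (le_of_lt hba) hp1, hfb⟩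
          · simp only [if_neg hkm]
            exact hwk k (by omega)
        · intro k hk
          by_cases hkm : k + 1 = m
          · have hkk : k ≠ m := by omega
            have hk1 : k = m - 1 := by omega
            simp only [if_pos hkm, if_neg hkk]
            rw [hk1]
            exact hba
          · have hkk : k ≠ m := by omega
            simp only [if_neg hkm, if_neg hkk]
            exact hwd k (by omega)
  obtain ⟨w, hw0, hwk, hwd⟩ := chain (2 * n) le_rfl
  -- strict anti on the range
  have anti : ∀ a b : ℕ, a < b → b < 2 * n → w b < w a := by
    intro a b hab hb
    induction b with
    | zero => omega
    | succ b ihb =>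
      rcases Nat.lt_or_ge a b with h | h
      · exact lt_trans (hwd b hb) (ihb h (by omega))
      · have : a = b := by omega
        subst this
        exact hwd a hb
  refine ⟨fun i => w (2 * (i : ℕ) + 1), fun i => w (2 * (i : ℕ)), ?_, ?_, ?_, ?_, ?_, ?_⟩
  · intro i
    exact (hwk (2 * (i : ℕ) + 1) (by have := i.2; omega)).1
  · intro i
    exact anti (2 * (i : ℕ)) (2 * (i : ℕ) + 1) (by omega) (by have := i.2; omega)
  · intro i j hij
    exact anti (2 * (i : ℕ) + 1) (2 * (j : ℕ)) (by exact_mod_cast Nat.succ_le_of_lt (by have := Fin.lt_iff_val_lt_val.mp hij; omega)) (by have := j.2; omega)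
  · simp only [Nat.mul_zero]
    rw [hw0]
    try rfl
  · intro i
    have h := (hwk (2 * (i : ℕ) + 1) (by have := i.2; omega)).2.2
    rw [h, tgt_odd]
    try ring
  · intro i
    have h := (hwk (2 * (i : ℕ)) (by have := i.2; omega)).2.2
    rw [h, tgt_even]
end

section
/- Let f be a strictly increasing function on [0,1] and let n be a positive integer. Suppose 0 < u_n < v_n < u_{n−1} < v_{n−1} < … < u_1 < v_1 ≤ 1 are numbers with f(u_i) = 3·9^{i−1} u_i and f(v_i) = 9^{i−1} v_i for every i = 1,…,n. Then v_i < 3·9^{k−i} u_k whenever 1 ≤ k < i ≤ n. -/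
/-- Inequality (10) in the proof of Lemma 2: if `f` is strictly increasing on `[0,1]` and
`0 < u_n < v_n < … < u_1 < v_1 ≤ 1` satisfy `f(u_i) = 3·9^(i-1) u_i` and
`f(v_i) = 9^(i-1) v_i`, then `v_i < 3·9^(k-i) u_k` whenever `k < i`.
(Here index `i : Fin n` corresponds to the paper's index `i + 1`.) -/
theorem v_lt_u_estimate (n : ℕ) (hn : 0 < n) (f : ℝ → ℝ)
    (hmono : StrictMonoOn f (Set.Icc (0:ℝ) 1))
    (u v : Fin n → ℝ)
    (hu : ∀ i, 0 < u i) (huv : ∀ i, u i < v i)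
    (hvu : ∀ i j : Fin n, i < j → v j < u i) (hv1 : v ⟨0, hn⟩ ≤ 1)
    (hfu : ∀ i, f (u i) = 3 * 9 ^ (i : ℕ) * u i)
    (hfv : ∀ i, f (v i) = 9 ^ (i : ℕ) * v i) :
    ∀ k i : Fin n, k < i → v i < 3 * (9:ℝ) ^ ((k : ℤ) - (i : ℤ)) * u k := by
  intro k i hki
  set z : Fin n := ⟨0, hn⟩ with hz
  have hvle : ∀ j : Fin n, v j ≤ 1 := by
    intro j
    rcases eq_or_ne j z with rfl | hne
    · exact hv1
    · have hzj : z < j := by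
        have : (j : ℕ) ≠ 0 := fun h => hne (Fin.ext h)
        exact Fin.lt_def.mpr (Nat.pos_of_ne_zero this)
      have h1 : v j < u z := hvu z j hzj
      have h2 : u z < v z := huv z
      linarith
  have hmemv : ∀ j, v j ∈ Set.Icc (0:ℝ) 1 := fun j =>
    ⟨le_of_lt (lt_trans (hu j) (huv j)), hvle j⟩
  have hmemu : ∀ j, u j ∈ Set.Icc (0:ℝ) 1 := fun j =>
    ⟨(hu j).le, (huv j).le.trans (hvle j)⟩
  have hlt := hmono (hmemv i) (hmemu k) (hvu k i hki)
  rw [hfv, hfu] at hlt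
  have h9 : (0:ℝ) < 9 ^ (i:ℕ) := by positivity
  have heq : (3:ℝ) * 9 ^ ((k:ℤ) - (i:ℤ)) * u k = 3 * 9 ^ (k:ℕ) * u k / 9 ^ (i:ℕ) := by
    rw [zpow_sub₀ (by norm_num : (9:ℝ) ≠ 0), zpow_natCast, zpow_natCast]
    ring
  rw [heq, lt_div_iff₀ h9]
  linarith [mul_comm (v i) ((9:ℝ) ^ (i:ℕ))]
end

section
/- Let n be a positive integer, let 0 < z_n < z_{n−1} < … < z_1 be real numbers, and let s ∈ {1,…,n}. Then Σ_{k=1}^{n} 4·9^{k−1} · z_k² (z_k² − 3 z_s²) / (z_k² + 3 z_s²)² < 0. -/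
/-- The estimate `L'(z_s) - R'(z_s) + R'(z_s) < 0` from the proof of Theorem 1: if
`0 < z_n < z_{n-1} < … < z_1`, then for every `s`,
`Σ_{k=1}^n 4·9^(k-1) · z_k² (z_k² - 3 z_s²) / (z_k² + 3 z_s²)² < 0`.
(Here index `k : Fin n` corresponds to the paper's index `k + 1`.) -/
theorem deriv_sum_neg (n : ℕ) (hn : 0 < n) (z : Fin n → ℝ)
    (hz : ∀ i, 0 < z i) (hanti : ∀ i j : Fin n, i < j → z j < z i) (s : Fin n) :
    ∑ k : Fin n, 4 * 9 ^ (k : ℕ) *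
      ((z k) ^ 2 * ((z k) ^ 2 - 3 * (z s) ^ 2) / ((z k) ^ 2 + 3 * (z s) ^ 2) ^ 2) < 0 := by
  have hws : 0 < z s := hz s
  set g : ℕ → ℝ := fun i =>
    if i < (s : ℕ) then 4 * 9 ^ i else if i = (s : ℕ) then -(9 ^ (s : ℕ)) / 2 else 0 with hg
  have key : ∀ k : Fin n,
      4 * 9 ^ (k : ℕ) *
        ((z k) ^ 2 * ((z k) ^ 2 - 3 * (z s) ^ 2) / ((z k) ^ 2 + 3 * (z s) ^ 2) ^ 2)
      ≤ g (k : ℕ) := by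
    intro k
    have hzk := hz k
    have hden : (0:ℝ) < ((z k) ^ 2 + 3 * (z s) ^ 2) ^ 2 := by positivity
    rcases lt_trichotomy (k : ℕ) (s : ℕ) with h | h | h
    · simp only [hg, if_pos h]
      have hf : (z k) ^ 2 * ((z k) ^ 2 - 3 * (z s) ^ 2) / ((z k) ^ 2 + 3 * (z s) ^ 2) ^ 2
          ≤ 1 := by
        rw [div_le_one hden]
        nlinarith [sq_nonneg (z k), sq_nonneg (z s), mul_pos hzk hws]
      have h9 : (0:ℝ) < 4 * 9 ^ (k : ℕ) := by positivity
      calc 4 * 9 ^ (k : ℕ) *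
            ((z k) ^ 2 * ((z k) ^ 2 - 3 * (z s) ^ 2) / ((z k) ^ 2 + 3 * (z s) ^ 2) ^ 2)
          ≤ 4 * 9 ^ (k : ℕ) * 1 := by
            exact mul_le_mul_of_nonneg_left hf (le_of_lt h9)
        _ = 4 * 9 ^ (k : ℕ) := by ring
    · have hks : k = s := Fin.ext h
      subst hks
      have hgs : g (k : ℕ) = -(9 ^ (k : ℕ)) / 2 := by simp [hg]
      rw [hgs]
      have hz2 : (z k) ^ 2 ≠ 0 := by positivity
      have : (z k) ^ 2 * ((z k) ^ 2 - 3 * (z k) ^ 2) / ((z k) ^ 2 + 3 * (z k) ^ 2) ^ 2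
          = -(1/8) := by
        field_simp
        ring
      rw [this]
      linarith [pow_pos (by norm_num : (0:ℝ) < 9) (k : ℕ)]
    · have hlt : z k < z s := hanti s k (by exact Fin.lt_def.mpr h)
      have h1 : (z k) ^ 2 ≤ (z s) ^ 2 := by nlinarith
      have h3 := mul_nonneg (sq_nonneg (z k)) (by nlinarith [sq_nonneg (z s)] : (0:ℝ) ≤ 3 * (z s) ^ 2 - (z k) ^ 2)
      have hnum : (z k) ^ 2 * ((z k) ^ 2 - 3 * (z s) ^ 2) ≤ 0 := by nlinarith [h3]
      have : (z k) ^ 2 * ((z k) ^ 2 - 3 * (z s) ^ 2) / ((z k) ^ 2 + 3 * (z s) ^ 2) ^ 2 ≤ 0 :=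
        div_nonpos_of_nonpos_of_nonneg hnum (le_of_lt hden)
      have hgk : g (k : ℕ) = 0 := by
        simp only [hg, if_neg (by omega : ¬ (k:ℕ) < (s:ℕ)), if_neg (by omega : ¬ (k:ℕ) = (s:ℕ))]
      rw [hgk]
      nlinarith [pow_pos (by norm_num : (0:ℝ) < 9) (k : ℕ)]
  have hle : ∑ k : Fin n, 4 * 9 ^ (k : ℕ) *
      ((z k) ^ 2 * ((z k) ^ 2 - 3 * (z s) ^ 2) / ((z k) ^ 2 + 3 * (z s) ^ 2) ^ 2)
      ≤ ∑ k : Fin n, g (k : ℕ) :=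
    Finset.sum_le_sum fun k _ => key k
  have hconv : ∑ k : Fin n, g (k : ℕ) = ∑ i ∈ Finset.range n, g i :=
    Fin.sum_univ_eq_sum_range g n
  have hsplit : ∑ i ∈ Finset.range n, g i = ∑ i ∈ Finset.range ((s : ℕ) + 1), g i := by
    refine (Finset.sum_subset ?_ ?_).symm
    · intro i hi
      simp only [Finset.mem_range] at hi ⊢
      have := s.isLt
      omega
    · intro i hi hni
      simp only [Finset.mem_range] at hi hni
      simp only [hg, if_neg (by omega : ¬ i < (s:ℕ)), if_neg (by omega : ¬ i = (s:ℕ))]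
  have hsucc : ∑ i ∈ Finset.range ((s : ℕ) + 1), g i
      = (∑ i ∈ Finset.range (s : ℕ), 4 * 9 ^ i) + (-(9 ^ (s : ℕ)) / 2 : ℝ) := by
    rw [Finset.sum_range_succ]
    congr 1
    · refine Finset.sum_congr rfl fun i hi => ?_
      simp only [Finset.mem_range] at hi
      simp only [hg, if_pos hi]
    · simp [hg]
  have hgeom : (∑ i ∈ Finset.range (s : ℕ), (9:ℝ) ^ i) = (9 ^ (s : ℕ) - 1) / 8 := by
    rw [geom_sum_eq (by norm_num : (9:ℝ) ≠ 1)]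
    norm_num
  have h9s : (1:ℝ) ≤ 9 ^ (s : ℕ) := one_le_pow₀ (by norm_num : (1:ℝ) ≤ 9)
  calc ∑ k : Fin n, 4 * 9 ^ (k : ℕ) *
      ((z k) ^ 2 * ((z k) ^ 2 - 3 * (z s) ^ 2) / ((z k) ^ 2 + 3 * (z s) ^ 2) ^ 2)
      ≤ ∑ k : Fin n, g (k : ℕ) := hle
    _ = (∑ i ∈ Finset.range (s : ℕ), 4 * 9 ^ i) + (-(9 ^ (s : ℕ)) / 2 : ℝ) := by
        rw [hconv, hsplit, hsucc]
    _ = 4 * ((9 ^ (s : ℕ) - 1) / 8) + (-(9 ^ (s : ℕ)) / 2 : ℝ) := by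
        rw [← Finset.mul_sum, hgeom]
    _ < 0 := by nlinarith
end

section
/- Let n be a positive integer, let R ∈ Q_{2n−1} be an odd function with R'(x) > 0 for all x ∈ [−1,1], and let ε ∈ (0, R'(0)/2). For γ > 0 define G_γ(x) = R(x) + 8(R'(0) − 2ε)·γ² x/(γ² + x²) on [−1,1]. Then: (i) G_γ is an odd function belonging to Q_{2n+1}; (ii) G_γ'(0) = 9 R'(0) − 16 ε; (iii) ‖G_γ‖ ≤ ‖R‖ + 4(R'(0) − 2ε)γ; and (iv) there exists γ_0 > 0 such that for all γ ∈ (0, γ_0), G_γ'(x) > 0 for all x ∈ [−1,1]. -/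
/-- `QMem m R` means `R` agrees on `[-1,1]` with a rational function `p/q`, where
`p, q` are real polynomials of degree at most `m` and `q` has no zeros on `[-1,1]`. -/
def QMem (m : ℕ) (R : ℝ → ℝ) : Prop :=
  ∃ p q : Polynomial ℝ, p.natDegree ≤ m ∧ q.natDegree ≤ m ∧
    (∀ x ∈ Set.Icc (-1:ℝ) 1, Polynomial.eval x q ≠ 0) ∧
    (∀ x ∈ Set.Icc (-1:ℝ) 1, R x = Polynomial.eval x p / Polynomial.eval x q)

/-- The uniform (supremum) norm on `C[-1,1]`. -/
noncomputable def supNorm (R : ℝ → ℝ) : ℝ := sSup ((fun x => |R x|) '' Set.Icc (-1:ℝ) 1)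

open Polynomial Set

lemma hasDerivAt_h_aux (γ x : ℝ) :
    HasDerivAt (fun y => γ^2 * y / (γ^2 + y^2)) (γ^2*(γ^2 - x^2)/(γ^2+x^2)^2) x ∨ γ = 0 := by
  by_cases hγ : γ = 0
  · exact Or.inr hγ
  left
  have hden : γ^2 + x^2 ≠ 0 := by positivity
  have h1 : HasDerivAt (fun y : ℝ => γ^2 * y) (γ^2) x := by
    simpa using (hasDerivAt_id x).const_mul (γ^2)
  have h2 : HasDerivAt (fun y : ℝ => γ^2 + y^2) (2*x) x := by
    simpa using ((hasDerivAt_pow 2 x).const_add (γ^2))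
  have := h1.div h2 hden
  exact this.congr_deriv (by ring)

lemma hasDerivAt_h (γ x : ℝ) (hγ : γ ≠ 0) :
    HasDerivAt (fun y => γ^2 * y / (γ^2 + y^2)) (γ^2*(γ^2 - x^2)/(γ^2+x^2)^2) x :=
  (hasDerivAt_h_aux γ x).resolve_right hγ

set_option maxHeartbeats 1600000 in
/-- Properties of the auxiliary function
`G_γ(x) = R(x) + 8(R'(0) - 2ε)·γ²x/(γ² + x²)` from the proof of Theorem 2:
(i) for every `γ > 0`, `G_γ` is odd on `[-1,1]` and belongs to `Q_{2n+1}`;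
(ii) `G_γ'(0) = 9 R'(0) - 16 ε`;
(iii) `‖G_γ‖ ≤ ‖R‖ + 4(R'(0) - 2ε)γ`;
(iv) for all sufficiently small `γ > 0`, `G_γ' > 0` on `[-1,1]`. -/
theorem G_gamma_properties (n : ℕ) (hn : 0 < n) (R : ℝ → ℝ)
    (hQ : QMem (2 * n - 1) R)
    (hodd : ∀ x ∈ Set.Icc (-1:ℝ) 1, R (-x) = - R x)
    (hpos : ∀ x ∈ Set.Icc (-1:ℝ) 1, 0 < derivWithin R (Set.Icc (-1:ℝ) 1) x)
    (ε : ℝ) (hε : 0 < ε) (hε2 : ε < derivWithin R (Set.Icc (-1:ℝ) 1) 0 / 2)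
    (G : ℝ → ℝ → ℝ)
    (hG : ∀ γ x, G γ x =
      R x + 8 * (derivWithin R (Set.Icc (-1:ℝ) 1) 0 - 2 * ε) * (γ ^ 2 * x / (γ ^ 2 + x ^ 2))) :
    (∀ γ : ℝ, 0 < γ →
      (∀ x ∈ Set.Icc (-1:ℝ) 1, G γ (-x) = - G γ x) ∧
      QMem (2 * n + 1) (G γ) ∧
      derivWithin (G γ) (Set.Icc (-1:ℝ) 1) 0 =
        9 * derivWithin R (Set.Icc (-1:ℝ) 1) 0 - 16 * ε ∧
      supNorm (G γ) ≤ supNorm R + 4 * (derivWithin R (Set.Icc (-1:ℝ) 1) 0 - 2 * ε) * γ) ∧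
    ∃ γ₀ > 0, ∀ γ : ℝ, 0 < γ → γ < γ₀ →
      ∀ x ∈ Set.Icc (-1:ℝ) 1, 0 < derivWithin (G γ) (Set.Icc (-1:ℝ) 1) x := by
  obtain ⟨p, q, hp, hq, hq0, hR⟩ := hQ
  set I : Set ℝ := Set.Icc (-1:ℝ) 1 with hI
  have huniq : UniqueDiffOn ℝ I := uniqueDiffOn_Icc (by norm_num)
  have h0I : (0:ℝ) ∈ I := by constructor <;> norm_num
  set s : ℝ → ℝ := fun x =>
    (eval x (derivative p) * eval x q - eval x p * eval x (derivative q)) / (eval x q)^2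
    with hs
  have hr_deriv : ∀ x ∈ I, HasDerivAt (fun y => eval y p / eval y q) (s x) x := by
    intro x hx
    exact (p.hasDerivAt x).div (q.hasDerivAt x) (hq0 x hx)
  have hRs : ∀ x ∈ I, derivWithin R I x = s x := by
    intro x hx
    have h1 : derivWithin R I x = derivWithin (fun y => eval y p / eval y q) I x :=
      derivWithin_congr (fun y hy => hR y hy) (hR x hx)
    rw [h1, ((hr_deriv x hx).hasDerivWithinAt).derivWithin (huniq x hx)]
  set D := derivWithin R I 0 with hD
  have hD0 : D = s 0 := hRs 0 h0I
  set c := D - 2*ε with hc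
  have hcpos : 0 < c := by rw [hc]; linarith
  have hscont : ContinuousOn s I := by
    apply ContinuousOn.div
    · exact (((derivative p).continuous.continuousOn.mul q.continuous.continuousOn).sub
        (p.continuous.continuousOn.mul (derivative q).continuous.continuousOn))
    · exact (q.continuous.pow 2).continuousOn
    · intro x hx; exact pow_ne_zero 2 (hq0 x hx)
  -- derivative formula for G γ on I
  have hGderiv : ∀ γ : ℝ, γ ≠ 0 → ∀ x ∈ I,
      derivWithin (G γ) I x = s x + 8*c*(γ^2*(γ^2-x^2)/(γ^2+x^2)^2) := by
    intro γ hγ x hx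
    have hF : HasDerivAt (fun y => eval y p / eval y q + 8*c*(γ^2*y/(γ^2+y^2)))
        (s x + 8*c*(γ^2*(γ^2-x^2)/(γ^2+x^2)^2)) x :=
      (hr_deriv x hx).add ((hasDerivAt_h γ x hγ).const_mul (8*c))
    have h1 : derivWithin (G γ) I x
        = derivWithin (fun y => eval y p / eval y q + 8*c*(γ^2*y/(γ^2+y^2))) I x := by
      apply derivWithin_congr
      · intro y hy; rw [hG γ y, hR y hy]
      · rw [hG γ x, hR x hx]
    rw [h1, hF.hasDerivWithinAt.derivWithin (huniq x hx)]
  constructor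
  · -- properties for each γ > 0
    intro γ hγ
    have hγ' : γ ≠ 0 := ne_of_gt hγ
    refine ⟨?_, ?_, ?_, ?_⟩
    · -- oddness
      intro x hx
      rw [hG γ (-x), hG γ x, hodd x hx]
      ring
    · -- QMem (2n+1)
      refine ⟨p * (C (γ^2) + X^2) + C (8*c*γ^2) * X * q, q * (C (γ^2) + X^2), ?_, ?_, ?_, ?_⟩
      · apply le_trans (natDegree_add_le _ _)
        apply max_le
        · apply le_trans (natDegree_mul_le)
          have h2 : (C (γ^2) + X^2 : Polynomial ℝ).natDegree ≤ 2 := by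
            apply le_trans (natDegree_add_le _ _)
            simp [natDegree_C, natDegree_X_pow]
          omega
        · apply le_trans (natDegree_mul_le)
          have h1 : (C (8*c*γ^2) * X : Polynomial ℝ).natDegree ≤ 1 := by
            apply le_trans (natDegree_mul_le)
            simp only [natDegree_C, natDegree_X]
            norm_num
          omega
      · apply le_trans (natDegree_mul_le)
        have h2 : (C (γ^2) + X^2 : Polynomial ℝ).natDegree ≤ 2 := by
          apply le_trans (natDegree_add_le _ _)
          simp [natDegree_C, natDegree_X_pow]
        omega
      · intro x hx
        simp only [eval_mul, eval_add, eval_C, eval_pow, eval_X]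
        exact mul_ne_zero (hq0 x hx) (by positivity)
      · intro x hx
        rw [hG γ x, hR x hx]
        simp only [eval_mul, eval_add, eval_C, eval_pow, eval_X]
        have h1 : eval x q ≠ 0 := hq0 x hx
        have h2 : γ^2 + x^2 ≠ 0 := by positivity
        field_simp
    · -- derivative at 0
      rw [hGderiv γ hγ' 0 h0I, ← hD0]
      have : γ^2*(γ^2-(0:ℝ)^2)/(γ^2+(0:ℝ)^2)^2 = 1 := by
        field_simp
        ring
      rw [this, hc]
      ring
    · -- sup norm bound
      have hRcont : ContinuousOn R I :=
        ContinuousOn.congr (p.continuous.continuousOn.div q.continuous.continuousOn hq0) hR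
      have hbdd : BddAbove ((fun x => |R x|) '' I) :=
        (isCompact_Icc.image_of_continuousOn hRcont.abs).bddAbove
      have hRle : ∀ x ∈ I, |R x| ≤ supNorm R := fun x hx => le_csSup hbdd ⟨x, hx, rfl⟩
      have hsup0 : 0 ≤ supNorm R := le_trans (abs_nonneg _) (hRle 0 h0I)
      apply Real.sSup_le
      · rintro y ⟨x, hx, rfl⟩
        have key : |γ^2*x/(γ^2+x^2)| ≤ γ/2 := by
          rw [abs_div, abs_of_pos (by positivity : (0:ℝ) < γ^2 + x^2), abs_mul,
            abs_of_pos (by positivity : (0:ℝ) < γ^2)]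
          rw [div_le_iff₀ (by positivity : (0:ℝ) < γ^2 + x^2)]
          nlinarith [sq_nonneg (γ - |x|), sq_abs x, abs_nonneg x, sq_nonneg x]
        have hGx : |G γ x| ≤ |R x| + 8*c*(γ/2) := by
          rw [hG γ x]
          calc |R x + 8 * c * (γ^2*x/(γ^2+x^2))| ≤ |R x| + |8*c| * |γ^2*x/(γ^2+x^2)| := by
                rw [← abs_mul]; exact abs_add_le _ _
            _ ≤ |R x| + 8*c*(γ/2) := by
                rw [abs_of_pos (by linarith : (0:ℝ) < 8*c)]
                have := mul_le_mul_of_nonneg_left key (by linarith : (0:ℝ) ≤ 8*c)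
                linarith
        calc |G γ x| ≤ |R x| + 8*c*(γ/2) := hGx
          _ ≤ supNorm R + 4*c*γ := by have := hRle x hx; linarith
      · have : (0:ℝ) ≤ 4*c*γ := by positivity
        linarith
  · -- part (iv)
    -- minimum of s on I
    obtain ⟨x₀, hx₀, hmin⟩ := isCompact_Icc.exists_isMinOn ⟨0, h0I⟩ hscont
    set m := s x₀ with hm
    have hmpos : 0 < m := by rw [hm, ← hRs x₀ hx₀]; exact hpos x₀ hx₀
    -- continuity at 0: get δ
    have hcw : ContinuousWithinAt s I 0 := hscont 0 h0I
    rw [Metric.continuousWithinAt_iff] at hcw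
    obtain ⟨δ, hδ, hδs⟩ := hcw ε hε
    refine ⟨min 1 (δ^2 * m / (8*c)), lt_min one_pos (by positivity), ?_⟩
    intro γ hγ0 hγ1 x hx
    have hγle1 : γ < 1 := lt_of_lt_of_le hγ1 (min_le_left _ _)
    have hγle2 : γ < δ^2 * m / (8*c) := lt_of_lt_of_le hγ1 (min_le_right _ _)
    rw [hGderiv γ (ne_of_gt hγ0) x hx]
    have hden : (0:ℝ) < (γ^2 + x^2)^2 := by positivity
    by_cases hxδ : |x| < δ
    · -- near 0 : s x > D - ε and the correction term ≥ -c
      have hsx : |s x - s 0| < ε := by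
        have := hδs hx (by simpa [Real.dist_eq] using hxδ)
        simpa [Real.dist_eq] using this
      have hsx' : D - ε < s x := by
        rw [hD0]
        cases' abs_lt.mp hsx with h1 h2
        linarith
      have hA : -(1/8 : ℝ) ≤ γ^2*(γ^2-x^2)/(γ^2+x^2)^2 := by
        rw [le_div_iff₀ hden]
        nlinarith [sq_nonneg (x^2 - 3*γ^2)]
      have : -c ≤ 8*c*(γ^2*(γ^2-x^2)/(γ^2+x^2)^2) := by
        have := mul_le_mul_of_nonneg_left hA (by linarith : (0:ℝ) ≤ 8*c)
        linarith
      have : D - ε - c < s x + 8*c*(γ^2*(γ^2-x^2)/(γ^2+x^2)^2) := by linarith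
      rw [hc] at this
      linarith
    · -- |x| ≥ δ : correction term bounded by γ²/δ²
      push_neg at hxδ
      have hx2 : δ^2 ≤ x^2 := by nlinarith [sq_abs x, abs_nonneg x]
      have heq : γ^2*(γ^2-x^2)/(γ^2+x^2)^2 = -(γ^2*(x^2-γ^2)/(γ^2+x^2)^2) := by ring
      have hbound : γ^2*(x^2-γ^2)/(γ^2+x^2)^2 ≤ γ^2/δ^2 := by
        rw [div_le_div_iff₀ hden (by positivity : (0:ℝ) < δ^2)]
        have hax : x^2 ≤ γ^2 + x^2 := by nlinarith [sq_nonneg γ]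
        have hnn : (0:ℝ) ≤ γ^2 * (γ^2 + x^2) := by positivity
        nlinarith [mul_nonneg (mul_nonneg (sq_nonneg γ) (sq_nonneg γ)) (sq_nonneg δ),
          mul_le_mul_of_nonneg_left hx2 hnn, mul_le_mul_of_nonneg_left hax hnn]
      have hA : -(γ^2/δ^2) ≤ γ^2*(γ^2-x^2)/(γ^2+x^2)^2 := by
        rw [heq]; linarith
      have hsmall : 8*c*(γ^2/δ^2) < m := by
        rw [lt_div_iff₀ (by positivity : (0:ℝ) < 8*c)] at hγle2
        have hγ2 : γ^2 ≤ γ := by nlinarith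
        have key : 8*c*γ^2 < δ^2 * m := by nlinarith
        rw [show 8*c*(γ^2/δ^2) = (8*c*γ^2)/δ^2 by ring,
          div_lt_iff₀ (by positivity : (0:ℝ) < δ^2)]
        linarith
      have h1 : m ≤ s x := hmin hx
      have h2 : -(8*c*(γ^2/δ^2)) ≤ 8*c*(γ^2*(γ^2-x^2)/(γ^2+x^2)^2) := by
        have h3 := mul_le_mul_of_nonneg_left hA (by linarith : (0:ℝ) ≤ 8*c)
        linarith
      linarith
end

section
/- For a positive integer n, let K_n denote the set of odd functions R ∈ Q_{2n−1} with R'(x) > 0 for all x ∈ [−1,1], and let S_n = sup_{R ∈ K_n} R'(0)/‖R‖. Then for every n ≥ 1, S_{n+1} ≥ 9 S_n; equivalently, for every R ∈ K_n and every c < 9·R'(0)/‖R‖ there exists G ∈ K_{n+1} with G'(0) > c·‖G‖. -/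
/-- `KMem n R` means `R` is an odd member of `Q_{2n-1}` with `R' > 0` on `[-1,1]`,
i.e. `R ∈ K_n` in the notation of the paper. -/
def KMem (n : ℕ) (R : ℝ → ℝ) : Prop :=
  QMem (2 * n - 1) R ∧
  (∀ x ∈ Set.Icc (-1:ℝ) 1, R (-x) = - R x) ∧
  (∀ x ∈ Set.Icc (-1:ℝ) 1, 0 < derivWithin R (Set.Icc (-1:ℝ) 1) x)

private lemma aux_upos (a ε x : ℝ) (ha : 1 < a) (hε : 0 < ε) : 0 < a*ε^2 + x^2 := by
  nlinarith [sq_nonneg x, sq_nonneg ε]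

private lemma aux_vpos (a ε x : ℝ) (ha : 1 < a) (hε : 0 < ε) : 0 < ε^2 + a*x^2 := by
  nlinarith [sq_nonneg x, sq_nonneg ε]

private lemma aux_abs (a ε x Rx : ℝ) (ha : 1 < a) :
    2 * (a ^ 2 - 1) * ε ^ 2 * (x * Rx) ≤ 2 * (a ^ 2 - 1) * ε ^ 2 * (|x| * |Rx|) := by
  have h1 : x * Rx ≤ |x| * |Rx| := by rw [← abs_mul]; exact le_abs_self _
  have h2 : (0:ℝ) ≤ 2 * (a ^ 2 - 1) * ε ^ 2 := by
    nlinarith [mul_nonneg (by nlinarith : (0:ℝ) ≤ a^2 - 1) (sq_nonneg ε)]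
  exact mul_le_mul_of_nonneg_left h1 h2

private lemma aux_small (a ε τ s₀ Ex Rx x : ℝ) (ha : 1 < a) (hε : 0 < ε)
    (hτ : 0 < τ) (hτs : τ < s₀)
    (hkey : 2 * (a ^ 2 - 1) * (s₀ + τ) < (s₀ - τ) * (1 + a) ^ 2)
    (hEx : s₀ - τ ≤ Ex) (hRx : |Rx| ≤ (s₀ + τ) * |x|) (hx0 : x ≠ 0) :
    2 * (a ^ 2 - 1) * ε ^ 2 * (x * Rx) < Ex * ((a*ε^2 + x^2) * (ε^2 + a*x^2)) := by
  have hx2 : 0 < x ^ 2 := by positivity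
  calc 2 * (a ^ 2 - 1) * ε ^ 2 * (x * Rx)
      ≤ 2 * (a ^ 2 - 1) * ε ^ 2 * (|x| * |Rx|) := aux_abs a ε x Rx ha
    _ ≤ 2 * (a ^ 2 - 1) * ε ^ 2 * (|x| * ((s₀ + τ) * |x|)) := by
        apply mul_le_mul_of_nonneg_left _
          (by nlinarith [mul_nonneg (by nlinarith : (0:ℝ) ≤ a^2 - 1) (sq_nonneg ε)])
        exact mul_le_mul_of_nonneg_left hRx (abs_nonneg x)
    _ = 2 * (a ^ 2 - 1) * (s₀ + τ) * (ε ^ 2 * x ^ 2) := by rw [← sq_abs x]; ring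
    _ < (s₀ - τ) * (1 + a) ^ 2 * (ε ^ 2 * x ^ 2) :=
        mul_lt_mul_of_pos_right hkey (by positivity)
    _ ≤ (s₀ - τ) * ((a*ε^2 + x^2) * (ε^2 + a*x^2)) := by
        nlinarith [mul_nonneg (by linarith : (0:ℝ) ≤ s₀ - τ)
          (mul_nonneg (by linarith : (0:ℝ) ≤ a) (sq_nonneg (ε^2 - x^2)))]
    _ ≤ Ex * ((a*ε^2 + x^2) * (ε^2 + a*x^2)) := by
        apply mul_le_mul_of_nonneg_right hEx
        exact le_of_lt (mul_pos (aux_upos a ε x ha hε) (aux_vpos a ε x ha hε))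

private lemma aux_large (a ε δ₀ N Ez Ex Rx x : ℝ) (ha : 1 < a) (hε : 0 < ε)
    (hδ : 0 < δ₀) (hN : 0 < N) (hEz : 0 < Ez) (hEx : Ez ≤ Ex) (hRx : |Rx| ≤ N)
    (hlarge : δ₀ < |x|) (hεdd : ε ^ 2 * (2 * (a ^ 2 - 1) * N) < a * Ez * δ₀ ^ 3) :
    2 * (a ^ 2 - 1) * ε ^ 2 * (x * Rx) < Ex * ((a*ε^2 + x^2) * (ε^2 + a*x^2)) := by
  have hxpos : 0 < |x| := lt_trans hδ hlarge
  have habs4 : |x|^3 * |x| = x^4 := by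
    rw [show |x|^3 * |x| = |x|^4 by ring, pow_abs,
      abs_of_nonneg (by positivity : (0:ℝ) ≤ x^4)]
  have hExpos : 0 < Ex := lt_of_lt_of_le hEz hEx
  calc 2 * (a ^ 2 - 1) * ε ^ 2 * (x * Rx)
      ≤ 2 * (a ^ 2 - 1) * ε ^ 2 * (|x| * |Rx|) := aux_abs a ε x Rx ha
    _ ≤ 2 * (a ^ 2 - 1) * ε ^ 2 * (|x| * N) := by
        apply mul_le_mul_of_nonneg_left _
          (by nlinarith [mul_nonneg (by nlinarith : (0:ℝ) ≤ a^2 - 1) (sq_nonneg ε)])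
        exact mul_le_mul_of_nonneg_left hRx (abs_nonneg x)
    _ = ε ^ 2 * (2 * (a ^ 2 - 1) * N) * |x| := by ring
    _ < a * Ez * δ₀ ^ 3 * |x| := mul_lt_mul_of_pos_right hεdd hxpos
    _ ≤ a * Ez * |x| ^ 3 * |x| := by
        apply mul_le_mul_of_nonneg_right _ (abs_nonneg x)
        apply mul_le_mul_of_nonneg_left (pow_le_pow_left₀ hδ.le hlarge.le 3)
        nlinarith
    _ = Ez * (a * x ^ 4) := by rw [mul_assoc, habs4]; ring
    _ ≤ Ex * ((a*ε^2 + x^2) * (ε^2 + a*x^2)) := by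
        apply mul_le_mul hEx _ (by positivity) hExpos.le
        nlinarith [mul_nonneg (by linarith : (0:ℝ) ≤ a) (sq_nonneg (ε^2)),
          mul_nonneg (sq_nonneg ε) (sq_nonneg x),
          mul_nonneg (sq_nonneg a) (mul_nonneg (sq_nonneg ε) (sq_nonneg x))]

private lemma aux_phi_le_a (a ε y : ℝ) (ha : 1 < a) (hε : 0 < ε) :
    (a*ε^2 + y^2)/(ε^2 + a*y^2) ≤ a := by
  rw [div_le_iff₀ (aux_vpos a ε y ha hε)]
  nlinarith [mul_nonneg (by nlinarith : (0:ℝ) ≤ a^2 - 1) (sq_nonneg y)]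

private lemma aux_phi_le' (a ε y : ℝ) (ha : 1 < a) (hε : 0 < ε) (hy : ε < y^2) :
    (a*ε^2 + y^2)/(ε^2 + a*y^2) ≤ (1 + a*ε)/a := by
  rw [div_le_div_iff₀ (aux_vpos a ε y ha hε) (by linarith)]
  nlinarith [hy, hε,
    mul_nonneg (by nlinarith : (0:ℝ) ≤ a^2*ε) (by linarith : (0:ℝ) ≤ y^2 - ε),
    mul_nonneg (by linarith : (0:ℝ) ≤ a) (by positivity : (0:ℝ) ≤ ε^3)]

private lemma aux_A (a c N s₀ ε : ℝ) (hc : 0 < c) (hN : 0 < N) (ha : 1 < a)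
    (hε : 0 < ε) (hb : ε * (a*(c*N)) < a^2*s₀ - c*N) :
    c * (N * ((1 + a*ε)/a)) < a * s₀ := by
  have h1 : c * (N * ((1 + a*ε)/a)) = (c*N*(1 + a*ε))/a := by ring
  rw [h1, div_lt_iff₀ (by linarith)]
  nlinarith

private lemma aux_B (a c s₀ τ e : ℝ) (ha : 1 < a) (hc : 0 < c) (hs : 0 < s₀)
    (hτ : 0 < τ) (he : 0 ≤ e) (h1 : e * (c*(s₀ + τ)) < s₀) :
    c * (a * ((s₀ + τ) * e)) < a * s₀ := by
  have := mul_lt_mul_of_pos_left h1 (show (0:ℝ) < a by linarith)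
  nlinarith


set_option maxHeartbeats 4000000 in
/-- `S_{n+1} ≥ 9 S_n`: for every `R ∈ K_n` and every `c < 9·R'(0)/‖R‖` there is a
`G ∈ K_{n+1}` with `G'(0) > c·‖G‖`. -/
theorem S_succ_ge_nine_mul (n : ℕ) (hn : 0 < n) (R : ℝ → ℝ) (hR : KMem n R)
    (c : ℝ) (hc : c < 9 * derivWithin R (Set.Icc (-1:ℝ) 1) 0 / supNorm R) :
    ∃ G : ℝ → ℝ, KMem (n + 1) G ∧
      c * supNorm G < derivWithin G (Set.Icc (-1:ℝ) 1) 0 := by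
  obtain ⟨⟨p, q, hpdeg, hqdeg, hq0, hpq⟩, hodd, hpos⟩ := hR
  have h01 : (0:ℝ) ∈ Set.Icc (-1:ℝ) 1 := by norm_num
  have hI : UniqueDiffOn ℝ (Set.Icc (-1:ℝ) 1) := uniqueDiffOn_Icc (by norm_num)
  have hR0 : R 0 = 0 := by
    have := hodd 0 h01
    simp only [neg_zero] at this; linarith
  -- The derivative function given by the rational representation
  set E : ℝ → ℝ := fun x =>
    (Polynomial.eval x (Polynomial.derivative p) * Polynomial.eval x q
      - Polynomial.eval x p * Polynomial.eval x (Polynomial.derivative q))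
      / (Polynomial.eval x q) ^ 2 with hEdef
  have hEderiv : ∀ x ∈ Set.Icc (-1:ℝ) 1,
      HasDerivWithinAt R (E x) (Set.Icc (-1:ℝ) 1) x := by
    intro x hx
    have h1 : HasDerivAt (fun y => Polynomial.eval y p / Polynomial.eval y q) (E x) x :=
      (p.hasDerivAt x).div (q.hasDerivAt x) (hq0 x hx)
    exact h1.hasDerivWithinAt.congr (fun y hy => hpq y hy) (hpq x hx)
  have hDE : ∀ x ∈ Set.Icc (-1:ℝ) 1, derivWithin R (Set.Icc (-1:ℝ) 1) x = E x :=
    fun x hx => (hEderiv x hx).derivWithin (hI x hx)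
  have hEpos : ∀ x ∈ Set.Icc (-1:ℝ) 1, 0 < E x := fun x hx => (hDE x hx) ▸ hpos x hx
  have hEcont : ContinuousOn E (Set.Icc (-1:ℝ) 1) := by
    apply ContinuousOn.div
    · fun_prop
    · fun_prop
    · intro x hx; exact pow_ne_zero 2 (hq0 x hx)
  have hRcont : ContinuousOn R (Set.Icc (-1:ℝ) 1) := by
    refine ContinuousOn.congr (f := fun y => Polynomial.eval y p / Polynomial.eval y q)
      ?_ (fun x hx => hpq x hx)
    exact ContinuousOn.div (by fun_prop) (by fun_prop) (fun x hx => hq0 x hx)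
  set s₀ : ℝ := derivWithin R (Set.Icc (-1:ℝ) 1) 0 with hs₀def
  have hs₀pos : 0 < s₀ := hpos 0 h01
  have hE0 : E 0 = s₀ := (hDE 0 h01).symm
  set N : ℝ := supNorm R with hNdef
  have hNle : ∀ x ∈ Set.Icc (-1:ℝ) 1, |R x| ≤ N := by
    intro x hx
    exact le_csSup (isCompact_Icc.bddAbove_image hRcont.abs) ⟨x, hx, rfl⟩
  have hNnonneg : 0 ≤ N := by
    refine Real.sSup_nonneg ?_
    rintro _ ⟨x, hx, rfl⟩; positivity
  rcases le_or_gt c 0 with hc0 | hc0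
  · -- easy case : c ≤ 0, take G = R
    refine ⟨R, ⟨⟨p, q, hpdeg.trans (by omega), hqdeg.trans (by omega), hq0, hpq⟩,
      hodd, hpos⟩, ?_⟩
    have hsupn : 0 ≤ supNorm R := hNnonneg
    nlinarith [hpos 0 h01]
  -- main case : c > 0
  have hNpos : 0 < N := by
    by_contra h
    push_neg at h
    have h9 : (0:ℝ) < 9 * s₀ := by positivity
    have : 9 * s₀ / N ≤ 0 := div_nonpos_of_nonneg_of_nonpos h9.le h
    linarith
  have hcN : c * N < 9 * s₀ := (lt_div_iff₀ hNpos).mp hc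
  -- choose a ∈ (1,3) with c*N < a² * s₀
  set w : ℝ := Real.sqrt (c * N / s₀) with hwdef
  have hw3 : w < 3 := by
    rw [hwdef]
    rw [Real.sqrt_lt' (by norm_num)]
    rw [div_lt_iff₀ hs₀pos]; nlinarith
  have hwnonneg : 0 ≤ w := Real.sqrt_nonneg _
  set a : ℝ := (max 1 w + 3) / 2 with hadef
  have ha1 : 1 < a := by
    have : (1:ℝ) ≤ max 1 w := le_max_left _ _
    rw [hadef]; linarith
  have ha3 : a < 3 := by
    have : max 1 w < 3 := max_lt (by norm_num) hw3
    rw [hadef]; linarith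
  have haw : w < a := by
    have : w ≤ max 1 w := le_max_right _ _
    rw [hadef]; linarith
  have hcNa : c * N < a ^ 2 * s₀ := by
    have hw2 : w ^ 2 = c * N / s₀ := Real.sq_sqrt (by positivity)
    have : c * N / s₀ < a ^ 2 := by nlinarith
    rw [div_lt_iff₀ hs₀pos] at this; linarith
  -- choose τ
  set τ : ℝ := s₀ * (1 + a) * (3 - a) / (2 * ((1 + a) ^ 2 + 2 * (a ^ 2 - 1))) with hτdef
  have hSpos : 0 < (1 + a) ^ 2 + 2 * (a ^ 2 - 1) := by nlinarith
  have hτpos : 0 < τ := by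
    rw [hτdef]
    exact div_pos (mul_pos (mul_pos hs₀pos (by linarith)) (by linarith)) (by nlinarith)
  have hτmul : τ * (2 * ((1 + a) ^ 2 + 2 * (a ^ 2 - 1))) = s₀ * (1 + a) * (3 - a) := by
    rw [hτdef]; field_simp
  have hτkey : 2 * (a ^ 2 - 1) * (s₀ + τ) < (s₀ - τ) * (1 + a) ^ 2 := by
    nlinarith [hτmul, mul_pos hτpos hSpos]
  have hτs₀ : τ < s₀ := by
    nlinarith [hτmul, hSpos, hs₀pos, ha1, mul_pos hs₀pos (show (0:ℝ) < 7*a^2+2*a-5 by nlinarith)]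
  -- choose δ₀ from continuity of E at 0
  have hcw : ContinuousWithinAt E (Set.Icc (-1:ℝ) 1) 0 := hEcont 0 h01
  rw [Metric.continuousWithinAt_iff] at hcw
  obtain ⟨δ, hδpos, hδ⟩ := hcw τ hτpos
  set δ₀ : ℝ := min (δ / 2) 1 with hδ₀def
  have hδ₀pos : 0 < δ₀ := by rw [hδ₀def]; positivity
  have hδ₀le1 : δ₀ ≤ 1 := min_le_right _ _
  have hδ₀prop : ∀ y ∈ Set.Icc (-1:ℝ) 1, |y| ≤ δ₀ → |E y - s₀| < τ := by
    intro y hy hyδ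
    have h1 : dist y 0 < δ := by
      rw [Real.dist_eq, sub_zero]
      calc |y| ≤ δ₀ := hyδ
        _ ≤ δ / 2 := min_le_left _ _
        _ < δ := by linarith
    have := hδ hy h1
    rwa [Real.dist_eq, hE0] at this
  -- global minimum of E
  obtain ⟨z, hz, hzmin⟩ := isCompact_Icc.exists_isMinOn
    (Set.nonempty_Icc.mpr (by norm_num)) hEcont
  have hm₀pos : 0 < E z := hEpos z hz
  -- choose ε
  have haa : (0:ℝ) < a := by linarith
  have hσpos : 0 < (a^2*s₀ - c*N)/(a*(c*N)) := by
    apply div_pos (by linarith) (by positivity)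
  set ε : ℝ := (1/2) * min (min (δ₀ ^ 2) ((a^2*s₀ - c*N)/(a*(c*N))))
      (min ((s₀ / (c * (s₀ + τ))) ^ 2) (Real.sqrt (a * E z * δ₀ ^ 3 / (2 * (a ^ 2 - 1) * N))))
      with hεdef
  have hεpos : 0 < ε := by
    rw [hεdef]
    have h1 : 0 < δ₀ ^ 2 := by positivity
    have h2 : 0 < (a^2*s₀ - c*N)/(a*(c*N)) := hσpos
    have h3 : 0 < (s₀ / (c * (s₀ + τ))) ^ 2 := by positivity
    have h4 : 0 < Real.sqrt (a * E z * δ₀ ^ 3 / (2 * (a ^ 2 - 1) * N)) := by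
      apply Real.sqrt_pos.mpr
      have : 0 < a ^ 2 - 1 := by nlinarith
      positivity
    have := lt_min (lt_min h1 h2) (lt_min h3 h4)
    linarith [this]
  have hεmin : ε < min (min (δ₀ ^ 2) ((a^2*s₀ - c*N)/(a*(c*N))))
      (min ((s₀ / (c * (s₀ + τ))) ^ 2) (Real.sqrt (a * E z * δ₀ ^ 3 / (2 * (a ^ 2 - 1) * N)))) := by
    have h2 : (0:ℝ) < min (min (δ₀ ^ 2) ((a^2*s₀ - c*N)/(a*(c*N))))
      (min ((s₀ / (c * (s₀ + τ))) ^ 2)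
        (Real.sqrt (a * E z * δ₀ ^ 3 / (2 * (a ^ 2 - 1) * N)))) := by
      rw [hεdef] at hεpos; linarith
    rw [hεdef]; linarith
  have hεa : ε < δ₀ ^ 2 :=
    lt_of_lt_of_le hεmin ((min_le_left _ _).trans (min_le_left _ _))
  have hεb : ε < (a^2*s₀ - c*N)/(a*(c*N)) :=
    lt_of_lt_of_le hεmin ((min_le_left _ _).trans (min_le_right _ _))
  have hεc : ε < (s₀ / (c * (s₀ + τ))) ^ 2 :=
    lt_of_lt_of_le hεmin ((min_le_right _ _).trans (min_le_left _ _))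
  have hεd : ε < Real.sqrt (a * E z * δ₀ ^ 3 / (2 * (a ^ 2 - 1) * N)) :=
    lt_of_lt_of_le hεmin ((min_le_right _ _).trans (min_le_right _ _))
  have ha2 : 0 < a ^ 2 - 1 := by nlinarith
  -- consequences of the choice of ε
  have hεδ : Real.sqrt ε < δ₀ := by
    rw [Real.sqrt_lt' hδ₀pos]; exact hεa
  have hεb' : ε * (a*(c*N)) < a^2*s₀ - c*N := by
    rw [lt_div_iff₀ (by positivity : (0:ℝ) < a*(c*N))] at hεb; linarith
  have hεcc : Real.sqrt ε < s₀ / (c * (s₀ + τ)) := by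
    rw [Real.sqrt_lt' (by positivity)]; exact hεc
  have hεdd : ε ^ 2 * (2 * (a ^ 2 - 1) * N) < a * E z * δ₀ ^ 3 := by
    have h1 : ε ^ 2 < a * E z * δ₀ ^ 3 / (2 * (a ^ 2 - 1) * N) :=
      (Real.lt_sqrt hεpos.le).mp hεd
    exact (lt_div_iff₀ (by positivity)).mp h1
  -- the modified function G
  have hvpos : ∀ x : ℝ, (0:ℝ) < ε^2 + a*x^2 := fun x => aux_vpos a ε x ha1 hεpos
  set G : ℝ → ℝ := fun x => R x * ((a*ε^2 + x^2)/(ε^2 + a*x^2)) with hGdef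
  -- local Lipschitz bound near 0 via MVT
  have hsub : Set.Icc (-δ₀) δ₀ ⊆ Set.Icc (-1:ℝ) 1 :=
    Set.Icc_subset_Icc (by linarith) hδ₀le1
  have hMVT : ∀ y : ℝ, |y| ≤ δ₀ → |R y| ≤ (s₀ + τ) * |y| := by
    intro y hy
    have hymem : y ∈ Set.Icc (-δ₀) δ₀ :=
      Set.mem_Icc.mpr ⟨by linarith [neg_abs_le y], by linarith [le_abs_self y]⟩
    have h0mem : (0:ℝ) ∈ Set.Icc (-δ₀) δ₀ := Set.mem_Icc.mpr ⟨by linarith, by linarith⟩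
    have hder : ∀ w ∈ Set.Icc (-δ₀) δ₀, HasDerivWithinAt R (E w) (Set.Icc (-δ₀) δ₀) w :=
      fun w hw => (hEderiv w (hsub hw)).mono hsub
    have hbd : ∀ w ∈ Set.Icc (-δ₀) δ₀, ‖E w‖ ≤ s₀ + τ := by
      intro w hw
      have h1 := hδ₀prop w (hsub hw) (abs_le.mpr ⟨(Set.mem_Icc.mp hw).1, (Set.mem_Icc.mp hw).2⟩)
      have h2 := abs_lt.mp h1
      rw [Real.norm_eq_abs, abs_le]
      constructor
      · linarith [hτpos, hs₀pos]
      · linarith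
    have := Convex.norm_image_sub_le_of_norm_hasDerivWithin_le hder hbd
      (convex_Icc _ _) h0mem hymem
    simpa [hR0, Real.norm_eq_abs] using this
  -- the key inequality
  have hKI : ∀ x ∈ Set.Icc (-1:ℝ) 1,
      2 * (a ^ 2 - 1) * ε ^ 2 * (x * R x) < E x * ((a*ε^2 + x^2) * (ε^2 + a*x^2)) := by
    intro x hx
    rcases eq_or_ne x 0 with rfl | hx0
    · have h1 : 0 < E 0 := hEpos 0 h01
      have h2 : (0:ℝ) < (a*ε^2 + 0^2) * (ε^2 + a*0^2) :=
        mul_pos (aux_upos a ε 0 ha1 hεpos) (aux_vpos a ε 0 ha1 hεpos)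
      rw [hR0]
      simpa using mul_pos h1 h2
    · rcases le_or_gt |x| δ₀ with hsmall | hlarge
      · have hEx : s₀ - τ ≤ E x := by
          have := abs_lt.mp (hδ₀prop x hx hsmall); linarith
        exact aux_small a ε τ s₀ (E x) (R x) x ha1 hεpos hτpos hτs₀ hτkey hEx
          (hMVT x hsmall) hx0
      · exact aux_large a ε δ₀ N (E z) (E x) (R x) x ha1 hεpos hδ₀pos hNpos hm₀pos
          (isMinOn_iff.mp hzmin x hx) (hNle x hx) hlarge hεdd
  -- derivative of G
  have hGderiv : ∀ x ∈ Set.Icc (-1:ℝ) 1, HasDerivWithinAt G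
      (E x * ((a*ε^2 + x^2)/(ε^2 + a*x^2))
        + R x * ((2*x * (ε^2 + a*x^2) - (a*ε^2 + x^2) * (a*(2*x))) / (ε^2 + a*x^2)^2))
      (Set.Icc (-1:ℝ) 1) x := by
    intro x hx
    have hu : HasDerivAt (fun y : ℝ => a*ε^2 + y^2) (2*x) x := by
      have := (hasDerivAt_pow 2 x).const_add (a * ε ^ 2)
      exact this.congr_deriv (by norm_num)
    have hv : HasDerivAt (fun y : ℝ => ε^2 + a*y^2) (a*(2*x)) x := by
      have := ((hasDerivAt_pow 2 x).const_mul a).const_add (ε ^ 2)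
      exact this.congr_deriv (by norm_num)
    exact (hEderiv x hx).mul ((hu.div hv (hvpos x).ne').hasDerivWithinAt)
  have hGd : ∀ x ∈ Set.Icc (-1:ℝ) 1, derivWithin G (Set.Icc (-1:ℝ) 1) x
      = E x * ((a*ε^2 + x^2)/(ε^2 + a*x^2))
        + R x * ((2*x * (ε^2 + a*x^2) - (a*ε^2 + x^2) * (a*(2*x))) / (ε^2 + a*x^2)^2) :=
    fun x hx => (hGderiv x hx).derivWithin (hI x hx)
  have hGdpos : ∀ x ∈ Set.Icc (-1:ℝ) 1, 0 < derivWithin G (Set.Icc (-1:ℝ) 1) x := by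
    intro x hx
    rw [hGd x hx]
    have hvx := hvpos x
    have key := hKI x hx
    have heq : E x * ((a*ε^2 + x^2)/(ε^2 + a*x^2))
        + R x * ((2*x * (ε^2 + a*x^2) - (a*ε^2 + x^2) * (a*(2*x))) / (ε^2 + a*x^2)^2)
        = (E x * ((a*ε^2 + x^2) * (ε^2 + a*x^2))
            - 2 * (a ^ 2 - 1) * ε ^ 2 * (x * R x)) / (ε^2 + a*x^2)^2 := by
      field_simp
      ring
    rw [heq]
    exact div_pos (by linarith) (by positivity)
  -- derivative of G at 0
  have hG0 : derivWithin G (Set.Icc (-1:ℝ) 1) 0 = a * s₀ := by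
    rw [hGd 0 h01, hR0, hE0]
    have hε2 : (ε:ℝ)^2 ≠ 0 := by positivity
    field_simp
    ring
  -- bound on |G|
  have hGbound : ∀ y ∈ Set.Icc (-1:ℝ) 1, |G y|
      ≤ max (N * ((1 + a*ε)/a)) (a * ((s₀ + τ) * Real.sqrt ε)) := by
    intro y hy
    have hvy := hvpos y
    have hφnn : 0 ≤ (a*ε^2 + y^2)/(ε^2 + a*y^2) :=
      div_nonneg (aux_upos a ε y ha1 hεpos).le hvy.le
    have hGy : |G y| = |R y| * ((a*ε^2 + y^2)/(ε^2 + a*y^2)) := by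
      rw [hGdef]; dsimp only; rw [abs_mul, abs_of_nonneg hφnn]
    rcases le_or_gt |y| (Real.sqrt ε) with hsm | hlg
    · refine le_trans ?_ (le_max_right _ _)
      rw [hGy]
      have h1 : |R y| ≤ (s₀ + τ) * |y| := hMVT y (le_trans hsm hεδ.le)
      have hφa : (a*ε^2 + y^2)/(ε^2 + a*y^2) ≤ a := aux_phi_le_a a ε y ha1 hεpos
      calc |R y| * ((a*ε^2 + y^2)/(ε^2 + a*y^2)) ≤ ((s₀ + τ) * |y|) * a := by
            apply mul_le_mul h1 hφa hφnn
            positivity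
        _ ≤ ((s₀ + τ) * Real.sqrt ε) * a := by
            apply mul_le_mul_of_nonneg_right _ (by linarith)
            exact mul_le_mul_of_nonneg_left hsm (by linarith)
        _ = a * ((s₀ + τ) * Real.sqrt ε) := by ring
    · refine le_trans ?_ (le_max_left _ _)
      rw [hGy]
      have hy2 : ε < y ^ 2 := by
        have h0 : 0 < |y| := lt_of_le_of_lt (Real.sqrt_nonneg ε) hlg
        have := (Real.sqrt_lt' h0).mp hlg
        rwa [sq_abs] at this
      have hφ : (a*ε^2 + y^2)/(ε^2 + a*y^2) ≤ (1 + a*ε)/a :=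
        aux_phi_le' a ε y ha1 hεpos hy2
      exact mul_le_mul (hNle y hy) hφ hφnn hNnonneg
  have hsup : supNorm G ≤ max (N * ((1 + a*ε)/a)) (a * ((s₀ + τ) * Real.sqrt ε)) := by
    apply Real.sSup_le
    · rintro _ ⟨y, hy, rfl⟩
      exact hGbound y hy
    · refine le_trans ?_ (le_max_left _ _)
      apply mul_nonneg hNnonneg
      apply div_nonneg _ haa.le
      have h1 : 0 < a*ε := mul_pos haa hεpos
      linarith
  -- final assembly
  refine ⟨G, ⟨?_, ?_, hGdpos⟩, ?_⟩
  · -- QMem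
    refine ⟨p * (Polynomial.C (a*ε^2) + Polynomial.X^2),
      q * (Polynomial.C (ε^2) + Polynomial.C a * Polynomial.X^2), ?_, ?_, ?_, ?_⟩
    · refine le_trans Polynomial.natDegree_mul_le ?_
      have h2 : (Polynomial.C (a*ε^2) + Polynomial.X^2 : Polynomial ℝ).natDegree ≤ 2 := by
        refine le_trans (Polynomial.natDegree_add_le _ _) (max_le ?_ ?_)
        · rw [Polynomial.natDegree_C]; norm_num
        · rw [Polynomial.natDegree_X_pow]
      have := add_le_add hpdeg h2
      omega
    · refine le_trans Polynomial.natDegree_mul_le ?_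
      have h2 : (Polynomial.C (ε^2) + Polynomial.C a * Polynomial.X^2 : Polynomial ℝ).natDegree ≤ 2 := by
        refine le_trans (Polynomial.natDegree_add_le _ _) ?_
        refine max_le (by rw [Polynomial.natDegree_C]; norm_num)
          (le_trans (Polynomial.natDegree_C_mul_le _ _) (by rw [Polynomial.natDegree_X_pow]))
      have := add_le_add hqdeg h2
      omega
    · intro x hx
      simp only [Polynomial.eval_mul, Polynomial.eval_add, Polynomial.eval_pow,
        Polynomial.eval_C, Polynomial.eval_X]
      exact mul_ne_zero (hq0 x hx) (hvpos x).ne'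
    · intro x hx
      simp only [Polynomial.eval_mul, Polynomial.eval_add, Polynomial.eval_pow,
        Polynomial.eval_C, Polynomial.eval_X]
      rw [hGdef]; dsimp only
      rw [hpq x hx, div_mul_div_comm]
  · -- odd
    intro x hx
    rw [hGdef]; dsimp only
    rw [hodd x hx, neg_sq]
    ring
  · -- final inequality
    rw [hG0]
    have hA : c * (N * ((1 + a*ε)/a)) < a * s₀ :=
      aux_A a c N s₀ ε hc0 hNpos ha1 hεpos hεb'
    have hB : c * (a * ((s₀ + τ) * Real.sqrt ε)) < a * s₀ := by
      have h1 : Real.sqrt ε * (c*(s₀ + τ)) < s₀ :=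
        (lt_div_iff₀ (by positivity)).mp hεcc
      exact aux_B a c s₀ τ (Real.sqrt ε) ha1 hc0 hs₀pos hτpos (Real.sqrt_nonneg ε) h1
    calc c * supNorm G
        ≤ c * max (N * ((1 + a*ε)/a)) (a * ((s₀ + τ) * Real.sqrt ε)) :=
          mul_le_mul_of_nonneg_left hsup hc0.le
      _ = max (c * (N * ((1 + a*ε)/a))) (c * (a * ((s₀ + τ) * Real.sqrt ε))) :=
          mul_max_of_nonneg _ _ hc0.le
      _ < a * s₀ := max_lt hA hB
end
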